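/- arXiv:1902.11270 — 2 statements merged into one kernel-verified Lean document; each statement's English description precedes it below -/
import Mathlib

section
/- Let L > 0, let p : [0,L] → ℝ be four times continuously differentiable, and let u : [0,L] → ℝ be three times continuously differentiable with u(0) = u(L) = 0. Then ∫₀^L (p'(x))³ u(x) u'''(x) dx = (9/2) ∫₀^L (p'(x))² p''(x) (u'(x))² dx − (3/2) ∫₀^L ((p')² p'')''(x) u(x)² dx − (1/2) [ (p'(L))³ (u'(L))² − (p'(0))³ (u'(0))² ]. -/
open Set intervalIntegral

/-- Integration-by-parts identity for the cross term `I^{2,2}` of the Carleman estimate: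
for `p` four times continuously differentiable on `[0,L]` and `u` three times
continuously differentiable with `u(0) = u(L) = 0`,
`∫ (p')³ u u''' = (9/2) ∫ (p')² p'' (u')² - (3/2) ∫ ((p')²p'')'' u²
  - (1/2) [ (p'(L))³ (u'(L))² - (p'(0))³ (u'(0))² ]`,
where `q' , q''` denote the first and second derivatives of `(p')² p''`. -/
theorem carleman_cross_term_I22
    (L : ℝ) (hL : 0 < L)
    (p p' p'' p''' p'''' u u' u'' u''' q' q'' : ℝ → ℝ)
    (hp1 : ∀ x ∈ Icc (0:ℝ) L, HasDerivWithinAt p (p' x) (Icc 0 L) x)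
    (hp2 : ∀ x ∈ Icc (0:ℝ) L, HasDerivWithinAt p' (p'' x) (Icc 0 L) x)
    (hp3 : ∀ x ∈ Icc (0:ℝ) L, HasDerivWithinAt p'' (p''' x) (Icc 0 L) x)
    (hp4 : ∀ x ∈ Icc (0:ℝ) L, HasDerivWithinAt p''' (p'''' x) (Icc 0 L) x)
    (hpc : ContinuousOn p'''' (Icc 0 L))
    (hu1 : ∀ x ∈ Icc (0:ℝ) L, HasDerivWithinAt u (u' x) (Icc 0 L) x)
    (hu2 : ∀ x ∈ Icc (0:ℝ) L, HasDerivWithinAt u' (u'' x) (Icc 0 L) x)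
    (hu3 : ∀ x ∈ Icc (0:ℝ) L, HasDerivWithinAt u'' (u''' x) (Icc 0 L) x)
    (huc : ContinuousOn u''' (Icc 0 L))
    (hq1 : ∀ x ∈ Icc (0:ℝ) L,
      HasDerivWithinAt (fun y => (p' y) ^ 2 * p'' y) (q' x) (Icc 0 L) x)
    (hq2 : ∀ x ∈ Icc (0:ℝ) L, HasDerivWithinAt q' (q'' x) (Icc 0 L) x)
    (hu0 : u 0 = 0) (huL : u L = 0) :
    (∫ x in (0:ℝ)..L, (p' x) ^ 3 * u x * u''' x)
      = (9 / 2) * (∫ x in (0:ℝ)..L, (p' x) ^ 2 * p'' x * (u' x) ^ 2)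
        - (3 / 2) * (∫ x in (0:ℝ)..L, q'' x * (u x) ^ 2)
        - (1 / 2) * ((p' L) ^ 3 * (u' L) ^ 2 - (p' 0) ^ 3 * (u' 0) ^ 2) := by
  set s : Set ℝ := Icc (0:ℝ) L with hs
  have hmem0 : (0:ℝ) ∈ s := ⟨le_refl 0, hL.le⟩
  have hmemL : L ∈ s := ⟨hL.le, le_refl L⟩
  have hud : UniqueDiffOn ℝ s := uniqueDiffOn_Icc hL
  -- continuity of the various functions
  have hcp' : ContinuousOn p' s := fun x hx => (hp2 x hx).continuousWithinAt
  have hcp'' : ContinuousOn p'' s := fun x hx => (hp3 x hx).continuousWithinAt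
  have hcp''' : ContinuousOn p''' s := fun x hx => (hp4 x hx).continuousWithinAt
  have hcu : ContinuousOn u s := fun x hx => (hu1 x hx).continuousWithinAt
  have hcu' : ContinuousOn u' s := fun x hx => (hu2 x hx).continuousWithinAt
  have hcu'' : ContinuousOn u'' s := fun x hx => (hu3 x hx).continuousWithinAt
  have hcq' : ContinuousOn q' s := fun x hx => (hq2 x hx).continuousWithinAt
  -- identify q' with its explicit formula
  have hq'eq : ∀ x ∈ s, q' x = 2 * p' x * p'' x ^ 2 + p' x ^ 2 * p''' x := by
    intro x hx
    have h1 : HasDerivWithinAt (fun y => (p' y) ^ 2 * p'' y)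
        (2 * p' x * p'' x ^ 2 + p' x ^ 2 * p''' x) s x := by
      have := ((hp2 x hx).pow 2).mul (hp3 x hx)
      exact this.congr_deriv (by simp only [Pi.pow_apply, Pi.mul_apply, Nat.cast_ofNat, Nat.add_one_sub_one, Nat.reduceSub]; ring)
    have := (hq1 x hx).derivWithin (hud x hx)
    rw [← this, h1.derivWithin (hud x hx)]
  -- identify q'' with an explicit continuous formula
  have hq''eq : ∀ x ∈ s, q'' x
      = 2 * p'' x ^ 3 + 6 * p' x * p'' x * p''' x + p' x ^ 2 * p'''' x := by
    intro x hx
    have hE : HasDerivWithinAt (fun y => 2 * p' y * p'' y ^ 2 + p' y ^ 2 * p''' y)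
        (2 * p'' x ^ 3 + 6 * p' x * p'' x * p''' x + p' x ^ 2 * p'''' x) s x := by
      have := (((hp2 x hx).const_mul 2).mul ((hp3 x hx).pow 2)).add
        (((hp2 x hx).pow 2).mul (hp4 x hx))
      exact this.congr_deriv (by simp only [Pi.pow_apply, Pi.mul_apply, Nat.cast_ofNat, Nat.add_one_sub_one, Nat.reduceSub]; ring)
    have hq2' : HasDerivWithinAt q'
        (2 * p'' x ^ 3 + 6 * p' x * p'' x * p''' x + p' x ^ 2 * p'''' x) s x :=
      hE.congr (fun y hy => (hq'eq y hy)) (hq'eq x hx)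
    have := (hq2 x hx).derivWithin (hud x hx)
    rw [← this, hq2'.derivWithin (hud x hx)]
  have hcq'' : ContinuousOn q'' s := by
    apply ContinuousOn.congr
      (f := fun x => 2 * p'' x ^ 3 + 6 * p' x * p'' x * p''' x + p' x ^ 2 * p'''' x)
    · exact (((hcp''.pow 3).const_smul (2:ℝ)).add
        ((((hcp'.const_smul (6:ℝ)).mul hcp'').mul hcp'''))).add ((hcp'.pow 2).mul hpc)
    · exact hq''eq
  -- the antiderivative
  set F : ℝ → ℝ := fun y => p' y ^ 3 * u y * u'' y - 1/2 * (p' y ^ 3 * u' y ^ 2)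
    - 3 * (p' y ^ 2 * p'' y * u y * u' y) + 3/2 * (q' y * u y ^ 2) with hF
  set G : ℝ → ℝ := fun y => p' y ^ 3 * u y * u''' y
    - 9/2 * (p' y ^ 2 * p'' y * u' y ^ 2) + 3/2 * (q'' y * u y ^ 2) with hG
  have hFd : ∀ x ∈ s, HasDerivWithinAt F (G x) s x := by
    intro x hx
    have h1 : HasDerivWithinAt (fun y => p' y ^ 3 * u y * u'' y)
        (((3 * p' x ^ 2 * p'' x) * u x + p' x ^ 3 * u' x) * u'' x
          + p' x ^ 3 * u x * u''' x) s x := by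
      have := (((hp2 x hx).pow 3).mul (hu1 x hx)).mul (hu3 x hx)
      exact this.congr_deriv (by simp only [Pi.pow_apply, Pi.mul_apply, Nat.cast_ofNat, Nat.add_one_sub_one, Nat.reduceSub])
    have h2 : HasDerivWithinAt (fun y => p' y ^ 3 * u' y ^ 2)
        ((3 * p' x ^ 2 * p'' x) * u' x ^ 2 + p' x ^ 3 * (2 * u' x * u'' x)) s x := by
      have := ((hp2 x hx).pow 3).mul ((hu2 x hx).pow 2)
      exact this.congr_deriv (by simp only [Pi.pow_apply, Pi.mul_apply, Nat.cast_ofNat, Nat.add_one_sub_one, Nat.reduceSub]; ring)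
    have h3 : HasDerivWithinAt (fun y => p' y ^ 2 * p'' y * u y * u' y)
        ((q' x * u x + (p' x ^ 2 * p'' x) * u' x) * u' x
          + p' x ^ 2 * p'' x * u x * u'' x) s x := by
      have := (((hq1 x hx).mul (hu1 x hx)).mul (hu2 x hx))
      exact this.congr_deriv (by simp only [Pi.pow_apply, Pi.mul_apply, Nat.cast_ofNat, Nat.add_one_sub_one, Nat.reduceSub])
    have h4 : HasDerivWithinAt (fun y => q' y * u y ^ 2)
        (q'' x * u x ^ 2 + q' x * (2 * u x * u' x)) s x := by
      have := (hq2 x hx).mul ((hu1 x hx).pow 2)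
      exact this.congr_deriv (by simp only [Pi.pow_apply, Pi.mul_apply, Nat.cast_ofNat, Nat.add_one_sub_one, Nat.reduceSub]; ring)
    have := ((h1.sub (h2.const_mul (1/2))).sub (h3.const_mul 3)).add (h4.const_mul (3/2))
    exact this.congr_deriv (by simp only [hG]; ring)
  have hFc : ContinuousOn F s := fun x hx => (hFd x hx).continuousWithinAt
  -- integrability
  have hiA : IntervalIntegrable (fun x => p' x ^ 3 * u x * u''' x) MeasureTheory.volume 0 L := by
    apply ContinuousOn.intervalIntegrable
    rw [uIcc_of_le hL.le]
    exact ((hcp'.pow 3).mul hcu).mul huc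
  have hiB : IntervalIntegrable (fun x => p' x ^ 2 * p'' x * u' x ^ 2)
      MeasureTheory.volume 0 L := by
    apply ContinuousOn.intervalIntegrable
    rw [uIcc_of_le hL.le]
    exact ((hcp'.pow 2).mul hcp'').mul (hcu'.pow 2)
  have hiC : IntervalIntegrable (fun x => q'' x * u x ^ 2) MeasureTheory.volume 0 L := by
    apply ContinuousOn.intervalIntegrable
    rw [uIcc_of_le hL.le]
    exact hcq''.mul (hcu.pow 2)
  have hiG : IntervalIntegrable G MeasureTheory.volume 0 L := by
    exact (hiA.sub (hiB.const_mul (9/2))).add (hiC.const_mul (3/2))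
  -- FTC
  have hFTC : ∫ x in (0:ℝ)..L, G x = F L - F 0 := by
    apply integral_eq_sub_of_hasDeriv_right_of_le hL.le hFc _ hiG
    intro x hx
    have hxs : x ∈ s := ⟨hx.1.le, hx.2.le⟩
    exact ((hFd x hxs).hasDerivAt (Icc_mem_nhds hx.1 hx.2)).hasDerivWithinAt
  have hsplit : ∫ x in (0:ℝ)..L, G x
      = (∫ x in (0:ℝ)..L, p' x ^ 3 * u x * u''' x)
        - (9/2) * (∫ x in (0:ℝ)..L, p' x ^ 2 * p'' x * u' x ^ 2)
        + (3/2) * (∫ x in (0:ℝ)..L, q'' x * u x ^ 2) := by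
    rw [hG]
    rw [integral_add (hiA.sub (hiB.const_mul (9/2))) (hiC.const_mul (3/2)),
      integral_sub hiA (hiB.const_mul (9/2)), integral_const_mul, integral_const_mul]
  have hFL : F L = - (1/2) * (p' L ^ 3 * u' L ^ 2) := by simp [hF, huL] <;> ring
  have hF0 : F 0 = - (1/2) * (p' 0 ^ 3 * u' 0 ^ 2) := by simp [hF, hu0] <;> ring
  rw [hsplit, hFL, hF0] at hFTC
  linarith
end

section
/- Let L, T > 0, let q : [0,L] × [0,T] → ℝ be continuously differentiable (in both variables), and let w : [0,L] × [0,T] → ℝ have continuous partial derivatives ∂_t w, ∂_x w, ∂²_x w and ∂_x∂_t w on [0,L] × [0,T], with w(x,0) = w(x,T) = 0 for all x ∈ [0,L]. Then ∫₀^T ∫₀^L [ q ∂_t w ∂²_x w + (∂_x q) ∂_t w ∂_x w ] dx dt = (1/2) ∫₀^T ∫₀^L (∂_t q) (∂_x w)² dx dt + ∫₀^T [ q(L,t) ∂_x w(L,t) ∂_t w(L,t) − q(0,t) ∂_x w(0,t) ∂_t w(0,t) ] dt. -/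
open Set intervalIntegral
open MeasureTheory

/-- Clamped extension of a two-variable function to the whole plane. -/
noncomputable def extR (L T : ℝ) (f : ℝ → ℝ → ℝ) : ℝ → ℝ → ℝ :=
  fun x t => f (max 0 (min x L)) (max 0 (min t T))

lemma extR_eq {L T : ℝ} (f : ℝ → ℝ → ℝ) {x t : ℝ} (hx : x ∈ Icc 0 L) (ht : t ∈ Icc 0 T) :
    extR L T f x t = f x t := by
  unfold extR
  rw [min_eq_left hx.2, max_eq_right hx.1, min_eq_left ht.2, max_eq_right ht.1]

lemma extR_continuous {L T : ℝ} (hL : 0 ≤ L) (hT : 0 ≤ T) {f : ℝ → ℝ → ℝ}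
    (hf : ContinuousOn (fun p : ℝ × ℝ => f p.1 p.2) (Icc 0 L ×ˢ Icc 0 T)) :
    Continuous (fun p : ℝ × ℝ => extR L T f p.1 p.2) := by
  have hg : Continuous (fun p : ℝ × ℝ => ((max 0 (min p.1 L), max 0 (min p.2 T)) : ℝ × ℝ)) := by
    fun_prop
  have := hf.comp_continuous hg (fun p => ?_)
  · exact this
  · constructor
    · exact ⟨le_max_left _ _, max_le (by simpa using hL) (min_le_right _ _)⟩
    · exact ⟨le_max_left _ _, max_le (by simpa using hT) (min_le_right _ _)⟩

/-- Fubini swap for a globally continuous function on [0,b]×[0,d] style intervals. -/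
lemma swap_integrals {f : ℝ → ℝ → ℝ} (hf : Continuous (fun p : ℝ × ℝ => f p.1 p.2))
    {b d : ℝ} (hb : 0 ≤ b) (hd : 0 ≤ d) :
    ∫ t in (0:ℝ)..d, ∫ x in (0:ℝ)..b, f x t = ∫ x in (0:ℝ)..b, ∫ t in (0:ℝ)..d, f x t := by
  rw [intervalIntegral.integral_of_le hd, intervalIntegral.integral_of_le hb]
  simp only [intervalIntegral.integral_of_le hb, intervalIntegral.integral_of_le hd]
  have hint : Integrable (Function.uncurry (fun t x => f x t))
      ((volume.restrict (Ioc 0 d)).prod (volume.restrict (Ioc 0 b))) := by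
    rw [Measure.prod_restrict]
    have hc : Continuous (Function.uncurry (fun t x : ℝ => f x t)) := by
      exact hf.comp (continuous_snd.prodMk continuous_fst)
    have : IntegrableOn (Function.uncurry (fun t x : ℝ => f x t)) (Icc 0 d ×ˢ Icc 0 b)
        (volume.prod volume) := by
      exact (hc.continuousOn).integrableOn_compact (isCompact_Icc.prod isCompact_Icc)
    have h2 := this.mono_set (Set.prod_mono Ioc_subset_Icc_self Ioc_subset_Icc_self)
    simpa [IntegrableOn, MeasureTheory.Measure.volume_eq_prod ℝ ℝ] using h2
  exact MeasureTheory.integral_integral_swap hint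

/-- FTC-2 for functions with a derivative within `Icc a b`, continuous derivative. -/
lemma myFTC {a b : ℝ} (hab : a ≤ b) {f f' : ℝ → ℝ}
    (hf : ∀ x ∈ Icc a b, HasDerivWithinAt f (f' x) (Icc a b) x)
    (hf' : ContinuousOn f' (Icc a b)) :
    ∫ x in a..b, f' x = f b - f a := by
  rcases eq_or_lt_of_le hab with rfl | hlt
  · simp
  · apply integral_eq_sub_of_hasDeriv_right_of_le hab
    · exact fun x hx => (hf x hx).continuousWithinAt
    · intro x hx
      exact (((hf x (Ioo_subset_Icc_self hx)).hasDerivAt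
        (Icc_mem_nhds hx.1 hx.2))).hasDerivWithinAt
    · exact hf'.intervalIntegrable_of_Icc hab

lemma deriv_unique_Icc {a b x : ℝ} (hab : a < b) (hx : x ∈ Icc a b) {f : ℝ → ℝ} {d₁ d₂ : ℝ}
    (h1 : HasDerivWithinAt f d₁ (Icc a b) x) (h2 : HasDerivWithinAt f d₂ (Icc a b) x) :
    d₁ = d₂ := by
  have hu := (uniqueDiffOn_Icc hab) x hx
  rw [← h1.derivWithin hu, ← h2.derivWithin hu]

lemma contOn_left {a b c d t : ℝ} {f : ℝ → ℝ → ℝ}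
    (hf : ContinuousOn (fun p : ℝ × ℝ => f p.1 p.2) (Icc a b ×ˢ Icc c d))
    (ht : t ∈ Icc c d) : ContinuousOn (fun x => f x t) (Icc a b) := by
  have : ContinuousOn (fun x : ℝ => ((x, t) : ℝ × ℝ)) (Icc a b) := by fun_prop
  exact hf.comp this (fun x hx => ⟨hx, ht⟩)

lemma contOn_right {a b c d x : ℝ} {f : ℝ → ℝ → ℝ}
    (hf : ContinuousOn (fun p : ℝ × ℝ => f p.1 p.2) (Icc a b ×ˢ Icc c d))
    (hx : x ∈ Icc a b) : ContinuousOn (fun t => f x t) (Icc c d) := by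
  have : ContinuousOn (fun t : ℝ => ((x, t) : ℝ × ℝ)) (Icc c d) := by fun_prop
  exact hf.comp this (fun t ht => ⟨hx, ht⟩)

/-- FTC-1 for a continuous function: the primitive has the integrand as derivative. -/
lemma primitive_hasDerivAt {g : ℝ → ℝ} (hg : Continuous g) (a t : ℝ) :
    HasDerivAt (fun u => ∫ τ in a..u, g τ) (g t) t :=
  integral_hasDerivAt_right (hg.intervalIntegrable _ _)
    (hg.stronglyMeasurableAtFilter _ _) hg.continuousAt

/-- Schwarz / Clairaut: the time derivative of `wx` exists and equals `wxt`. -/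
lemma schwarz {L T : ℝ} (hL : 0 < L) (hT : 0 < T)
    {w wt wx wxt : ℝ → ℝ → ℝ}
    (hwtc : ContinuousOn (fun p : ℝ × ℝ => wt p.1 p.2) (Icc 0 L ×ˢ Icc 0 T))
    (hwxtc : ContinuousOn (fun p : ℝ × ℝ => wxt p.1 p.2) (Icc 0 L ×ˢ Icc 0 T))
    (hdwt : ∀ x ∈ Icc (0:ℝ) L, ∀ t ∈ Icc (0:ℝ) T,
      HasDerivWithinAt (fun t' => w x t') (wt x t) (Icc 0 T) t)
    (hdwx : ∀ t ∈ Icc (0:ℝ) T, ∀ x ∈ Icc (0:ℝ) L,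
      HasDerivWithinAt (fun x' => w x' t) (wx x t) (Icc 0 L) x)
    (hdwxt : ∀ t ∈ Icc (0:ℝ) T, ∀ x ∈ Icc (0:ℝ) L,
      HasDerivWithinAt (fun x' => wt x' t) (wxt x t) (Icc 0 L) x) :
    ∀ x ∈ Icc (0:ℝ) L, ∀ t ∈ Icc (0:ℝ) T,
      HasDerivWithinAt (fun t' => wx x t') (wxt x t) (Icc 0 T) t := by
  set W := extR L T wxt with hWdef
  have hWc : Continuous (fun p : ℝ × ℝ => W p.1 p.2) := extR_continuous hL.le hT.le hwxtc
  have hWc2 : ∀ x : ℝ, Continuous (fun t => W x t) := fun x =>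
    hWc.comp (continuous_const.prodMk continuous_id)
  -- the key integral representation of wx
  have key : ∀ x ∈ Icc (0:ℝ) L, ∀ t ∈ Icc (0:ℝ) T,
      wx x t = wx x 0 + ∫ τ in (0:ℝ)..t, W x τ := by
    intro x hx t ht
    -- the parametric integral φ is continuous in the space variable
    have hφc : Continuous (fun y : ℝ => ∫ τ in (0:ℝ)..t, W y τ) := by
      exact intervalIntegral.continuous_parametric_intervalIntegral_of_continuous'
        (f := fun y τ => W y τ) (by exact hWc) 0 t
    -- Claim 1 : the primitive of φ equals (w · t - w · 0) - const on Icc 0 L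
    have claim1 : ∀ z ∈ Icc (0:ℝ) L,
        (∫ y in (0:ℝ)..z, ∫ τ in (0:ℝ)..t, W y τ)
          = (w z t - w 0 t) - (w z 0 - w 0 0) := by
      intro z hz
      have hswap := swap_integrals (f := fun y τ => W y τ) hWc hz.1 ht.1
      rw [← hswap]
      have hinner : ∀ τ ∈ uIcc (0:ℝ) t, (∫ y in (0:ℝ)..z, W y τ)
          = wt z τ - wt 0 τ := by
        intro τ hτ
        rw [uIcc_of_le ht.1] at hτ
        have hτT : τ ∈ Icc (0:ℝ) T := ⟨hτ.1, hτ.2.trans ht.2⟩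
        have : (∫ y in (0:ℝ)..z, W y τ) = ∫ y in (0:ℝ)..z, wxt y τ := by
          apply intervalIntegral.integral_congr
          intro y hy
          rw [uIcc_of_le hz.1] at hy
          exact extR_eq wxt ⟨hy.1, hy.2.trans hz.2⟩ hτT
        rw [this]
        apply myFTC hz.1
        · intro y hy
          exact (hdwxt τ hτT y ⟨hy.1, hy.2.trans hz.2⟩).mono
            (Icc_subset_Icc le_rfl hz.2)
        · exact (contOn_left hwxtc hτT).mono (Icc_subset_Icc le_rfl hz.2)
      rw [intervalIntegral.integral_congr hinner]
      exact myFTC (f := fun τ => w z τ - w 0 τ) (f' := fun τ => wt z τ - wt 0 τ) ht.1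
        (fun τ hτ =>
          ((hdwt z hz τ ⟨hτ.1, hτ.2.trans ht.2⟩).sub
            (hdwt 0 ⟨le_rfl, hL.le⟩ τ ⟨hτ.1, hτ.2.trans ht.2⟩)).mono
          (Icc_subset_Icc le_rfl ht.2))
        (((contOn_right hwtc hz).sub (contOn_right hwtc ⟨le_rfl, hL.le⟩)).mono
          (Icc_subset_Icc le_rfl ht.2))
    -- Claim 2: derivative comparison at x and uniqueness
    have hF : HasDerivWithinAt (fun z => ∫ y in (0:ℝ)..z, ∫ τ in (0:ℝ)..t, W y τ)
        (∫ τ in (0:ℝ)..t, W x τ) (Icc 0 L) x :=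
      (primitive_hasDerivAt hφc 0 x).hasDerivWithinAt
    have hG : HasDerivWithinAt (fun z => (w z t - w 0 t) - (w z 0 - w 0 0))
        (wx x t - wx x 0) (Icc 0 L) x := by
      have : HasDerivWithinAt (fun z => (w z t - w 0 t) - (w z 0 - w 0 0)) _ (Icc 0 L) x :=
        ((hdwx t ht x hx).sub_const (w 0 t)).sub
        ((hdwx 0 ⟨le_rfl, hT.le⟩ x hx).sub_const (w 0 0))
      simpa using this
    have hF' : HasDerivWithinAt (fun z => (w z t - w 0 t) - (w z 0 - w 0 0))
        (∫ τ in (0:ℝ)..t, W x τ) (Icc 0 L) x :=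
      hF.congr (fun z hz => (claim1 z hz).symm) (claim1 x hx).symm
    have := deriv_unique_Icc hL hx hG hF'
    linarith [this]
  -- conclude: t' ↦ wx x 0 + ∫₀^{t'} W x equals wx x ·, with derivative W x t = wxt x t
  intro x hx t ht
  have h1 : HasDerivAt (fun t' => wx x 0 + ∫ τ in (0:ℝ)..t', W x τ) (W x t) t :=
    (primitive_hasDerivAt (hWc2 x) 0 t).const_add (wx x 0)
  have h2 : HasDerivWithinAt (fun t' => wx x t') (W x t) (Icc 0 T) t :=
    h1.hasDerivWithinAt.congr (fun s hs => key x hx s hs) (key x hx t ht)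
  have : W x t = wxt x t := extR_eq wxt hx ht
  rwa [this] at h2



/-- Combined integration-by-parts identity for the cross terms `I^{1,1} + I^{1,3}` of the
Carleman estimate: with `q` of class `C¹` on the rectangle and `w` vanishing at `t = 0, T`,
`∫∫ [q w_t w_xx + q_x w_t w_x] = (1/2) ∫∫ q_t (w_x)²
  + ∫₀^T [ q(L,t) w_x(L,t) w_t(L,t) - q(0,t) w_x(0,t) w_t(0,t) ] dt`. -/
theorem carleman_cross_terms_I11_I13
    (L T : ℝ) (hL : 0 < L) (hT : 0 < T)
    (q qx qt w wt wx wxx wxt : ℝ → ℝ → ℝ)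
    (hq : ContinuousOn (fun p : ℝ × ℝ => q p.1 p.2) (Icc 0 L ×ˢ Icc 0 T))
    (hqxc : ContinuousOn (fun p : ℝ × ℝ => qx p.1 p.2) (Icc 0 L ×ˢ Icc 0 T))
    (hqtc : ContinuousOn (fun p : ℝ × ℝ => qt p.1 p.2) (Icc 0 L ×ˢ Icc 0 T))
    (hdqx : ∀ t ∈ Icc (0:ℝ) T, ∀ x ∈ Icc (0:ℝ) L,
      HasDerivWithinAt (fun x' => q x' t) (qx x t) (Icc 0 L) x)
    (hdqt : ∀ x ∈ Icc (0:ℝ) L, ∀ t ∈ Icc (0:ℝ) T,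
      HasDerivWithinAt (fun t' => q x t') (qt x t) (Icc 0 T) t)
    (hw : ContinuousOn (fun p : ℝ × ℝ => w p.1 p.2) (Icc 0 L ×ˢ Icc 0 T))
    (hwtc : ContinuousOn (fun p : ℝ × ℝ => wt p.1 p.2) (Icc 0 L ×ˢ Icc 0 T))
    (hwxc : ContinuousOn (fun p : ℝ × ℝ => wx p.1 p.2) (Icc 0 L ×ˢ Icc 0 T))
    (hwxxc : ContinuousOn (fun p : ℝ × ℝ => wxx p.1 p.2) (Icc 0 L ×ˢ Icc 0 T))
    (hwxtc : ContinuousOn (fun p : ℝ × ℝ => wxt p.1 p.2) (Icc 0 L ×ˢ Icc 0 T))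
    (hdwt : ∀ x ∈ Icc (0:ℝ) L, ∀ t ∈ Icc (0:ℝ) T,
      HasDerivWithinAt (fun t' => w x t') (wt x t) (Icc 0 T) t)
    (hdwx : ∀ t ∈ Icc (0:ℝ) T, ∀ x ∈ Icc (0:ℝ) L,
      HasDerivWithinAt (fun x' => w x' t) (wx x t) (Icc 0 L) x)
    (hdwxx : ∀ t ∈ Icc (0:ℝ) T, ∀ x ∈ Icc (0:ℝ) L,
      HasDerivWithinAt (fun x' => wx x' t) (wxx x t) (Icc 0 L) x)
    (hdwxt : ∀ t ∈ Icc (0:ℝ) T, ∀ x ∈ Icc (0:ℝ) L,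
      HasDerivWithinAt (fun x' => wt x' t) (wxt x t) (Icc 0 L) x)
    (hw0 : ∀ x ∈ Icc (0:ℝ) L, w x 0 = 0)
    (hwT : ∀ x ∈ Icc (0:ℝ) L, w x T = 0) :
    (∫ t in (0:ℝ)..T, ∫ x in (0:ℝ)..L,
        q x t * wt x t * wxx x t + qx x t * wt x t * wx x t)
      = (1 / 2) * (∫ t in (0:ℝ)..T, ∫ x in (0:ℝ)..L, qt x t * (wx x t) ^ 2)
        + (∫ t in (0:ℝ)..T,
            q L t * wx L t * wt L t - q 0 t * wx 0 t * wt 0 t) := by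

  have hT' := hT.le
  have hL' := hL.le
  have h0T : (0:ℝ) ∈ Icc (0:ℝ) T := ⟨le_rfl, hT'⟩
  have hTT : T ∈ Icc (0:ℝ) T := ⟨hT', le_rfl⟩
  have h0L : (0:ℝ) ∈ Icc (0:ℝ) L := ⟨le_rfl, hL'⟩
  have hLL : L ∈ Icc (0:ℝ) L := ⟨hL', le_rfl⟩
  -- `wx` vanishes at `t = 0` and `t = T`
  have hwx0 : ∀ x ∈ Icc (0:ℝ) L, wx x 0 = 0 := by
    intro x hx
    have h0 : HasDerivWithinAt (fun x' => w x' 0) 0 (Icc 0 L) x :=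
      (hasDerivWithinAt_const x _ (0:ℝ)).congr (fun y hy => hw0 y hy) (hw0 x hx)
    exact deriv_unique_Icc hL hx (hdwx 0 h0T x hx) h0
  have hwxT : ∀ x ∈ Icc (0:ℝ) L, wx x T = 0 := by
    intro x hx
    have h0 : HasDerivWithinAt (fun x' => w x' T) 0 (Icc 0 L) x :=
      (hasDerivWithinAt_const x _ (0:ℝ)).congr (fun y hy => hwT y hy) (hwT x hx)
    exact deriv_unique_Icc hL hx (hdwx T hTT x hx) h0
  -- Schwarz: the `t`-derivative of `wx` is `wxt`
  have hSch := schwarz hL hT hwtc hwxtc hdwt hdwx hdwxt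
  -- continuous extensions of the two auxiliary integrands
  have hf1 : ContinuousOn (fun p : ℝ × ℝ => q p.1 p.2 * wx p.1 p.2 * wxt p.1 p.2)
      (Icc 0 L ×ˢ Icc 0 T) := (hq.mul hwxc).mul hwxtc
  have hf2 : ContinuousOn (fun p : ℝ × ℝ => qt p.1 p.2 * (wx p.1 p.2) ^ 2)
      (Icc 0 L ×ˢ Icc 0 T) := hqtc.mul (hwxc.pow 2)
  set F1 := extR L T (fun x t => q x t * wx x t * wxt x t) with hF1def
  set F2 := extR L T (fun x t => qt x t * (wx x t) ^ 2) with hF2def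
  have hF1c : Continuous (fun p : ℝ × ℝ => F1 p.1 p.2) := extR_continuous hL' hT' hf1
  have hF2c : Continuous (fun p : ℝ × ℝ => F2 p.1 p.2) := extR_continuous hL' hT' hf2
  -- Step 1: integration by parts in `x`, for each fixed `t`
  have step1 : ∀ t ∈ Icc (0:ℝ) T,
      (∫ x in (0:ℝ)..L, q x t * wt x t * wxx x t + qx x t * wt x t * wx x t)
        = (q L t * wx L t * wt L t - q 0 t * wx 0 t * wt 0 t)
          - ∫ x in (0:ℝ)..L, F1 x t := by
    intro t ht
    have hD : ∀ x ∈ Icc (0:ℝ) L, HasDerivWithinAt (fun x' => q x' t * wx x' t * wt x' t)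
        (qx x t * wx x t * wt x t + q x t * wxx x t * wt x t + q x t * wx x t * wxt x t)
        (Icc 0 L) x := by
      intro x hx
      have hd : HasDerivWithinAt (fun x' => q x' t * wx x' t * wt x' t) _ (Icc 0 L) x :=
        ((hdqx t ht x hx).mul (hdwxx t ht x hx)).mul (hdwxt t ht x hx)
      convert hd using 1
      simp only [Pi.mul_apply]
      ring
    have hDc : ContinuousOn (fun x => qx x t * wx x t * wt x t + q x t * wxx x t * wt x t
        + q x t * wx x t * wxt x t) (Icc 0 L) :=
      ((((contOn_left hqxc ht).mul (contOn_left hwxc ht)).mul (contOn_left hwtc ht)).add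
        (((contOn_left hq ht).mul (contOn_left hwxxc ht)).mul (contOn_left hwtc ht))).add
        (((contOn_left hq ht).mul (contOn_left hwxc ht)).mul (contOn_left hwxtc ht))
    have hFTC := myFTC hL' hD hDc
    have hsplit : (∫ x in (0:ℝ)..L, q x t * wt x t * wxx x t + qx x t * wt x t * wx x t)
        = (∫ x in (0:ℝ)..L, (qx x t * wx x t * wt x t + q x t * wxx x t * wt x t
            + q x t * wx x t * wxt x t)) - ∫ x in (0:ℝ)..L, q x t * wx x t * wxt x t := by
      rw [← intervalIntegral.integral_sub (hDc.intervalIntegrable_of_Icc hL')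
          (((((contOn_left hq ht).mul (contOn_left hwxc ht)).mul
            (contOn_left hwxtc ht)).intervalIntegrable_of_Icc hL' :
            IntervalIntegrable (fun x => q x t * wx x t * wxt x t) volume 0 L))]
      apply intervalIntegral.integral_congr
      intro x _
      ring
    have hcongr : (∫ x in (0:ℝ)..L, q x t * wx x t * wxt x t) = ∫ x in (0:ℝ)..L, F1 x t := by
      apply intervalIntegral.integral_congr
      intro x hx
      rw [uIcc_of_le hL'] at hx
      exact (extR_eq (fun x t => q x t * wx x t * wxt x t) hx ht).symm
    rw [hsplit, hFTC, hcongr]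
  -- Step 2: integration by parts in `t`, for each fixed `x`
  have step5 : ∀ x ∈ Icc (0:ℝ) L,
      (∫ t in (0:ℝ)..T, F1 x t) = (-(1/2)) * ∫ t in (0:ℝ)..T, F2 x t := by
    intro x hx
    have hG : ∀ t ∈ Icc (0:ℝ) T,
        HasDerivWithinAt (fun t' => (1/2 : ℝ) * (q x t' * (wx x t') ^ 2))
          ((1/2 : ℝ) * (qt x t * (wx x t) ^ 2) + q x t * wx x t * wxt x t) (Icc 0 T) t := by
      intro t ht
      have hd : HasDerivWithinAt (fun t' => (1/2 : ℝ) * (q x t' * (wx x t') ^ 2)) _ (Icc 0 T) t :=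
        ((hdqt x hx t ht).mul ((hSch x hx t ht).pow 2)).const_mul (1/2 : ℝ)
      convert hd using 1
      push_cast
      simp only [Pi.pow_apply]
      ring
    have hint1 : ContinuousOn (fun t => qt x t * (wx x t) ^ 2) (Icc 0 T) :=
      (contOn_right hqtc hx).mul ((contOn_right hwxc hx).pow 2)
    have hint2 : ContinuousOn (fun t => q x t * wx x t * wxt x t) (Icc 0 T) :=
      ((contOn_right hq hx).mul (contOn_right hwxc hx)).mul (contOn_right hwxtc hx)
    have hFTC := myFTC hT' hG ((continuousOn_const.mul hint1).add hint2)
    rw [hwx0 x hx, hwxT x hx] at hFTC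
    norm_num at hFTC
    have hsplit : (∫ t in (0:ℝ)..T,
          ((1/2 : ℝ) * (qt x t * (wx x t) ^ 2) + q x t * wx x t * wxt x t))
        = (1/2 : ℝ) * (∫ t in (0:ℝ)..T, qt x t * (wx x t) ^ 2)
          + ∫ t in (0:ℝ)..T, q x t * wx x t * wxt x t := by
      rw [intervalIntegral.integral_add
          ((continuousOn_const.mul hint1).intervalIntegrable_of_Icc hT' :
            IntervalIntegrable (fun t => (1/2 : ℝ) * (qt x t * (wx x t) ^ 2)) volume 0 T)
          (hint2.intervalIntegrable_of_Icc hT'), intervalIntegral.integral_const_mul]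
    have hc1 : (∫ t in (0:ℝ)..T, F1 x t) = ∫ t in (0:ℝ)..T, q x t * wx x t * wxt x t := by
      apply intervalIntegral.integral_congr
      intro t ht
      rw [uIcc_of_le hT'] at ht
      exact extR_eq (fun x t => q x t * wx x t * wxt x t) hx ht
    have hc2 : (∫ t in (0:ℝ)..T, F2 x t) = ∫ t in (0:ℝ)..T, qt x t * (wx x t) ^ 2 := by
      apply intervalIntegral.integral_congr
      intro t ht
      rw [uIcc_of_le hT'] at ht
      exact extR_eq (fun x t => qt x t * (wx x t) ^ 2) hx ht
    rw [hc1, hc2]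
    rw [hsplit] at hFTC
    linarith
  -- continuity of the boundary term
  have hbdryc : ContinuousOn (fun t => q L t * wx L t * wt L t - q 0 t * wx 0 t * wt 0 t)
      (Icc 0 T) :=
    (((contOn_right hq hLL).mul (contOn_right hwxc hLL)).mul (contOn_right hwtc hLL)).sub
      (((contOn_right hq h0L).mul (contOn_right hwxc h0L)).mul (contOn_right hwtc h0L))
  have hC1 : Continuous (fun t => ∫ x in (0:ℝ)..L, F1 x t) :=
    intervalIntegral.continuous_parametric_intervalIntegral_of_continuous'
      (f := fun t x => F1 x t) (hF1c.comp (continuous_snd.prodMk continuous_fst)) 0 L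
  -- main decomposition
  have hmain : (∫ t in (0:ℝ)..T, ∫ x in (0:ℝ)..L,
        q x t * wt x t * wxx x t + qx x t * wt x t * wx x t)
      = (∫ t in (0:ℝ)..T, q L t * wx L t * wt L t - q 0 t * wx 0 t * wt 0 t)
        - ∫ t in (0:ℝ)..T, ∫ x in (0:ℝ)..L, F1 x t := by
    rw [← intervalIntegral.integral_sub (hbdryc.intervalIntegrable_of_Icc hT')
        (hC1.continuousOn.intervalIntegrable_of_Icc hT')]
    apply intervalIntegral.integral_congr
    intro t ht
    rw [uIcc_of_le hT'] at ht
    exact step1 t ht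
  -- value of the cross double integral
  have hCval : (∫ t in (0:ℝ)..T, ∫ x in (0:ℝ)..L, F1 x t)
      = (-(1/2)) * ∫ t in (0:ℝ)..T, ∫ x in (0:ℝ)..L, qt x t * (wx x t) ^ 2 := by
    rw [swap_integrals hF1c hL' hT']
    have h1 : (∫ x in (0:ℝ)..L, ∫ t in (0:ℝ)..T, F1 x t)
        = ∫ x in (0:ℝ)..L, (-(1/2)) * ∫ t in (0:ℝ)..T, F2 x t := by
      apply intervalIntegral.integral_congr
      intro x hx
      rw [uIcc_of_le hL'] at hx
      exact step5 x hx
    rw [h1, intervalIntegral.integral_const_mul, ← swap_integrals hF2c hL' hT']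
    congr 1
    apply intervalIntegral.integral_congr
    intro t ht
    rw [uIcc_of_le hT'] at ht
    apply intervalIntegral.integral_congr
    intro x hx
    rw [uIcc_of_le hL'] at hx
    exact extR_eq (fun x t => qt x t * (wx x t) ^ 2) hx ht
  rw [hmain, hCval]
  ring
end
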